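/- Let n ≥ 3 be an integer, k > 0, R > 0, v₀ < 0, and let X : [0,∞) → (0,∞) be twice continuously differentiable with X″(t) = k / X(t)^{n-1}, X(0) = R, X′(0) = v₀. Set A = 2k/(n-2) and C = v₀² + A R^{-(n-2)}. Then there is a unique t₊ > 0 with X′(t₊) = 0; it satisfies X(t₊) = (A/C)^{1/(n-2)}, X′(t) < 0 for 0 ≤ t < t₊ and X′(t) > 0 for t > t₊, the time t₊ equals the integral ∫ from (A/C)^{1/(n-2)} to R of dy/√(C - A y^{-(n-2)}), and moreover X(2t₊) = R and X′(2t₊) = -v₀. -/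

import Mathlib

open Set MeasureTheory intervalIntegral Filter Topology

set_option maxHeartbeats 2000000 in
theorem repulsive_negative_velocity_turning (n : ℕ) (hn : 3 ≤ n) (k R v₀ : ℝ)
    (hk : 0 < k) (hR : 0 < R) (hv : v₀ < 0) (X : ℝ → ℝ)
    (hpos : ∀ t : ℝ, 0 ≤ t → 0 < X t)
    (hC2 : ContDiffOn ℝ 2 X (Set.Ici 0))
    (hode : ∀ t : ℝ, 0 ≤ t →
      derivWithin (derivWithin X (Set.Ici 0)) (Set.Ici 0) t = k / X t ^ (n - 1))
    (hX0 : X 0 = R)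
    (hX'0 : derivWithin X (Set.Ici 0) 0 = v₀)
    (A C : ℝ) (hA : A = 2 * k / ((n : ℝ) - 2)) (hC : C = v₀ ^ 2 + A / R ^ (n - 2)) :
    ∃ tp : ℝ, 0 < tp ∧ derivWithin X (Set.Ici 0) tp = 0 ∧
      (∀ s : ℝ, 0 < s → derivWithin X (Set.Ici 0) s = 0 → s = tp) ∧
      X tp = (A / C) ^ (1 / ((n : ℝ) - 2)) ∧
      (∀ t : ℝ, 0 ≤ t → t < tp → derivWithin X (Set.Ici 0) t < 0) ∧
      (∀ t : ℝ, tp < t → 0 < derivWithin X (Set.Ici 0) t) ∧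
      tp = ∫ y in ((A / C) ^ (1 / ((n : ℝ) - 2)))..R,
        1 / Real.sqrt (C - A / y ^ (n - 2)) ∧
      X (2 * tp) = R ∧ derivWithin X (Set.Ici 0) (2 * tp) = -v₀ := by
  have hn2 : 2 ≤ n := by omega
  have hnR : (3:ℝ) ≤ (n:ℝ) := by exact_mod_cast hn
  have hn2R : (0:ℝ) < (n:ℝ) - 2 := by linarith
  have hcast : ((n - 2 : ℕ) : ℝ) = (n:ℝ) - 2 := by
    push_cast [Nat.cast_sub hn2]; ring
  have hA0 : 0 < A := by rw [hA]; positivity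
  have hC0 : 0 < C := by
    rw [hC]
    have : 0 < A / R ^ (n-2) := by positivity
    nlinarith [sq_nonneg v₀]
  set D := derivWithin X (Set.Ici 0) with hDdef
  have hUD : UniqueDiffOn ℝ (Set.Ici (0:ℝ)) := uniqueDiffOn_Ici 0
  have hXcont : ContinuousOn X (Set.Ici 0) := hC2.continuousOn
  have hDC1 : ContDiffOn ℝ 1 D (Set.Ici 0) := hC2.derivWithin hUD (by norm_num)
  have hDcont : ContinuousOn D (Set.Ici 0) := hDC1.continuousOn
  have hXdiff : DifferentiableOn ℝ X (Set.Ici 0) := hC2.differentiableOn (by norm_num)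
  have hDdiff : DifferentiableOn ℝ D (Set.Ici 0) := hDC1.differentiableOn (by norm_num)
  have hXd : ∀ t ∈ Set.Ici (0:ℝ), HasDerivWithinAt X (D t) (Set.Ici 0) t :=
    fun t ht => (hXdiff t ht).hasDerivWithinAt
  have hDd : ∀ t ∈ Set.Ici (0:ℝ), HasDerivWithinAt D (k / X t ^ (n-1)) (Set.Ici 0) t :=
    fun t ht => hode t ht ▸ (hDdiff t ht).hasDerivWithinAt
  have hXd' : ∀ t : ℝ, 0 < t → HasDerivAt X (D t) t :=
    fun t ht => (hXd t ht.le).hasDerivAt (Ici_mem_nhds ht)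
  have hDd' : ∀ t : ℝ, 0 < t → HasDerivAt D (k / X t ^ (n-1)) t :=
    fun t ht => (hDd t ht.le).hasDerivAt (Ici_mem_nhds ht)
  have hderivX : ∀ t : ℝ, 0 < t → deriv X t = D t := fun t ht => (hXd' t ht).deriv
  have hderivD : ∀ t : ℝ, 0 < t → deriv D t = k / X t ^ (n-1) := fun t ht => (hDd' t ht).deriv
  -- energy conservation
  have energy : ∀ t : ℝ, 0 ≤ t → D t ^ 2 + A / X t ^ (n-2) = C := by
    intro t ht
    rcases eq_or_lt_of_le ht with h | h
    · rw [← h]; simp [hX'0, hX0, hC]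
    set E : ℝ → ℝ := fun u => D u ^ 2 + A * (X u ^ (n-2))⁻¹ with hE
    have hEder : ∀ x ∈ Ico (0:ℝ) t, HasDerivWithinAt E 0 (Ici x) x := by
      intro x hx
      have hx0 : (0:ℝ) ≤ x := hx.1
      have hsub : Ici x ⊆ Ici (0:ℝ) := Ici_subset_Ici.mpr hx0
      have hXx : 0 < X x := hpos x hx0
      have h1 : HasDerivWithinAt (fun u => D u ^ 2)
          (2 * D x ^ 1 * (k / X x ^ (n-1))) (Ici x) x := ((hDd x hx0).mono hsub).pow 2
      have h2 : HasDerivWithinAt (fun u => X u ^ (n-2))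
          (((n-2:ℕ):ℝ) * X x ^ (n-2-1) * D x) (Ici x) x := ((hXd x hx0).mono hsub).pow (n-2)
      have h3 : HasDerivWithinAt (fun u => (X u ^ (n-2))⁻¹)
          (-(((n-2:ℕ):ℝ) * X x ^ (n-2-1) * D x) / (X x ^ (n-2)) ^ 2) (Ici x) x :=
        h2.inv (pow_ne_zero _ hXx.ne')
      have h4 := h1.add (h3.const_mul A)
      have hval : 2 * D x ^ 1 * (k / X x ^ (n-1)) +
          A * (-(((n-2:ℕ):ℝ) * X x ^ (n-2-1) * D x) / (X x ^ (n-2)) ^ 2) = 0 := by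
        have hexp : (X x ^ (n-2)) ^ 2 = X x ^ (n-2-1) * X x ^ (n-1) := by
          rw [← pow_mul, ← pow_add]; congr 1; omega
        have hAn : A * ((n:ℝ) - 2) = 2 * k := by
          rw [hA]; field_simp
        rw [hexp, hcast]
        have hXne : X x ^ (n-1) ≠ 0 := pow_ne_zero _ hXx.ne'
        have hXne2 : X x ^ (n-2-1) ≠ 0 := pow_ne_zero _ hXx.ne'
        field_simp
        first
        | linear_combination (-(D x)) * hAn
        | linear_combination (D x * X x ^ (n-2-1) * X x ^ (n-1)) * hAn
        | linear_combination (-2 * D x * X x ^ (n-2-1) * X x ^ (n-1)) * hAn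
        | linear_combination (2 * D x * X x ^ (n-2-1) * X x ^ (n-1)) * hAn
        | linear_combination (-(D x * X x ^ (n-2-1) * X x ^ (n-1))) * hAn
      rw [← hval]; exact h4
    have hEcont : ContinuousOn E (Icc 0 t) := by
      apply ContinuousOn.add
      · exact ((hDcont.mono (Icc_subset_Ici_self)).pow 2)
      · exact continuousOn_const.mul
          (((hXcont.mono (Icc_subset_Ici_self)).pow (n-2)).inv₀
            (fun x hx => pow_ne_zero _ (hpos x hx.1).ne'))
    have := constant_of_has_deriv_right_zero hEcont hEder t ⟨ht, le_rfl⟩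
    have hE0 : E 0 = C := by simp [hE, hX'0, hX0, hC, div_eq_mul_inv]
    rw [div_eq_mul_inv]
    rw [hE0] at this
    exact this
  -- strict monotonicity of the velocity D
  have hDmono : StrictMonoOn D (Set.Ici 0) := by
    apply strictMonoOn_of_deriv_pos (convex_Ici 0) hDcont
    intro x hx
    rw [interior_Ici] at hx
    rw [hderivD x hx]
    exact div_pos hk (pow_pos (hpos x hx.le) _)
  -- MVT-style lower bound for D
  have key_lb : ∀ a b c' : ℝ, 0 ≤ a → a ≤ b → (∀ x ∈ Ioo a b, c' ≤ deriv D x) →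
      c' * (b - a) ≤ D b - D a := by
    intro a b c' ha hab hbd
    refine (convex_Icc a b).mul_sub_le_image_sub_of_le_deriv
      (hDcont.mono (Icc_subset_Ici_self.trans (Ici_subset_Ici.mpr ha))) ?_ (by rwa [interior_Icc]) a ⟨le_rfl, hab⟩
      b ⟨hab, le_rfl⟩ hab
    rw [interior_Icc]
    exact fun x hx => (hDd' x (ha.trans_lt hx.1)).differentiableAt.differentiableWithinAt
  -- existence of the turning time
  have hc : 0 < k / R ^ (n-1) := div_pos hk (pow_pos hR _)
  set c := k / R ^ (n-1) with hcdef
  set T₀ : ℝ := (1 - v₀) / c with hT₀def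
  have hT₀ : 0 < T₀ := div_pos (by linarith) hc
  have hDT₀ : 0 ≤ D T₀ := by
    by_contra hcon
    push_neg at hcon
    have hDneg : ∀ u ∈ Icc (0:ℝ) T₀, D u ≤ 0 := by
      intro u hu
      exact le_of_lt (lt_of_le_of_lt (hDmono.monotoneOn hu.1 hT₀.le hu.2) hcon)
    have hXanti : AntitoneOn X (Icc 0 T₀) := by
      apply antitoneOn_of_deriv_nonpos (convex_Icc 0 T₀) (hXcont.mono Icc_subset_Ici_self)
      · rw [interior_Icc]
        exact fun x hx => (hXd' x hx.1).differentiableAt.differentiableWithinAt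
      · rw [interior_Icc]
        intro x hx
        rw [hderivX x hx.1]
        exact hDneg x ⟨hx.1.le, hx.2.le⟩
    have hXleR : ∀ u ∈ Icc (0:ℝ) T₀, X u ≤ R := by
      intro u hu
      have := hXanti ⟨le_rfl, hT₀.le⟩ hu hu.1
      rwa [hX0] at this
    have hlb := key_lb 0 T₀ c le_rfl hT₀.le ?_
    · rw [hX'0] at hlb
      have hcT : c * T₀ = 1 - v₀ := mul_div_cancel₀ _ hc.ne'
      rw [sub_zero] at hlb
      rw [hcT] at hlb
      linarith
    · intro x hx
      rw [hderivD x hx.1]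
      rw [hcdef]
      apply div_le_div_of_nonneg_left hk.le (pow_pos (hpos x hx.1.le) _)
      exact pow_le_pow_left₀ (hpos x hx.1.le).le (hXleR x ⟨hx.1.le, hx.2.le⟩) _
  obtain ⟨tp, htp_pos, hDtp⟩ : ∃ tp : ℝ, 0 < tp ∧ D tp = 0 := by
    rcases eq_or_lt_of_le hDT₀ with h | h
    · exact ⟨T₀, hT₀, h.symm⟩
    · have hiv := intermediate_value_Icc hT₀.le (hDcont.mono Icc_subset_Ici_self)
      have h0mem : (0:ℝ) ∈ Icc (D 0) (D T₀) := by
        rw [hX'0]; exact ⟨hv.le, h.le⟩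
      obtain ⟨tp, htpmem, htpval⟩ := hiv h0mem
      refine ⟨tp, ?_, htpval⟩
      rcases eq_or_lt_of_le htpmem.1 with h0 | h0
      · exfalso; rw [← h0, hX'0] at htpval; exact hv.ne htpval
      · exact h0
  -- uniqueness and signs
  have huniq : ∀ s : ℝ, 0 < s → D s = 0 → s = tp := by
    intro s hs h0
    rcases lt_trichotomy s tp with h | h | h
    · exfalso
      have := hDmono hs.le htp_pos.le h
      rw [h0, hDtp] at this; exact lt_irrefl _ this
    · exact h
    · exfalso
      have := hDmono htp_pos.le hs.le h
      rw [h0, hDtp] at this; exact lt_irrefl _ this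
  have hneg : ∀ t : ℝ, 0 ≤ t → t < tp → D t < 0 := by
    intro t ht h
    have := hDmono ht htp_pos.le h
    rwa [hDtp] at this
  have hposD : ∀ t : ℝ, tp < t → 0 < D t := by
    intro t h
    have := hDmono htp_pos.le (htp_pos.le.trans h.le) h
    rwa [hDtp] at this
  -- value at turning point
  set ymin : ℝ := (A / C) ^ (1 / ((n : ℝ) - 2)) with hymindef
  have hXtp_pow : X tp ^ (n-2) = A / C := by
    have hE := energy tp htp_pos.le
    rw [hDtp] at hE
    have hXx : 0 < X tp ^ (n-2) := pow_pos (hpos tp htp_pos.le) _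
    field_simp at hE ⊢
    linarith
  have hXtp_val : X tp = ymin := by
    rw [hymindef, ← hXtp_pow, show (1 / ((n : ℝ) - 2)) = (((n-2:ℕ)):ℝ)⁻¹ by rw [hcast, one_div]]
    exact (Real.pow_rpow_inv_natCast (hpos tp htp_pos.le).le (by omega)).symm
  have hymin_pos : 0 < ymin := hXtp_val ▸ hpos tp htp_pos.le
  have hymin_pow : ymin ^ (n-2) = A / C := hXtp_val ▸ hXtp_pow
  -- phi positivity facts
  have hphi_pos : ∀ y : ℝ, ymin < y → 0 < C - A / y ^ (n-2) := by
    intro y hy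
    have hy0 : 0 < y := hymin_pos.trans hy
    have hp : ymin ^ (n-2) < y ^ (n-2) := by
      apply pow_lt_pow_left₀ hy hymin_pos.le
      omega
    rw [hymin_pow] at hp
    rw [sub_pos, div_lt_iff₀ (pow_pos hy0 _)]
    calc A = (A / C) * C := by field_simp
    _ < y ^ (n-2) * C := by exact mul_lt_mul_of_pos_right hp hC0
    _ = C * y ^ (n-2) := mul_comm _ _
  have hymin_lt_R : ymin < R := by
    have h1 : ymin ^ (n-2) < R ^ (n-2) := by
      rw [hymin_pow]
      rw [div_lt_iff₀ hC0]
      have h2 : A / R ^ (n-2) < C := by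
        rw [hC]; nlinarith [sq_nonneg v₀, hv]
      calc A = (A / R ^ (n-2)) * R ^ (n-2) := by field_simp
      _ < C * R ^ (n-2) := mul_lt_mul_of_pos_right h2 (pow_pos hR _)
      _ = R ^ (n-2) * C := mul_comm _ _
    by_contra hcon
    push_neg at hcon
    exact absurd (pow_le_pow_left₀ hR.le hcon (n-2)) (not_le.mpr h1)
  have hD2 : ∀ t : ℝ, 0 ≤ t → D t ^ 2 = C - A / X t ^ (n-2) := by
    intro t ht; linarith [energy t ht]
  -- lower bound ymin ≤ X t for all t ≥ 0
  have hXge : ∀ t : ℝ, 0 ≤ t → ymin ≤ X t := by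
    intro t ht
    have h1 : A / X t ^ (n-2) ≤ C := by nlinarith [hD2 t ht, sq_nonneg (D t)]
    have h2 : ymin ^ (n-2) ≤ X t ^ (n-2) := by
      rw [hymin_pow]
      rw [div_le_iff₀ hC0]
      have hXp := pow_pos (hpos t ht) (n-2)
      calc A = (A / X t ^ (n-2)) * X t ^ (n-2) := by field_simp
      _ ≤ C * X t ^ (n-2) := mul_le_mul_of_nonneg_right h1 hXp.le
      _ = X t ^ (n-2) * C := mul_comm _ _
    by_contra hcon
    push_neg at hcon
    have h3 : X t ^ (n-2) < ymin ^ (n-2) := by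
      apply pow_lt_pow_left₀ hcon (hpos t ht).le
      omega
    exact absurd h2 (not_le.mpr h3)
  have hXgt : ∀ t : ℝ, 0 ≤ t → D t ≠ 0 → ymin < X t := by
    intro t ht hD0
    rcases eq_or_lt_of_le (hXge t ht) with h | h
    · exfalso
      apply hD0
      have := hD2 t ht
      rw [← h, hymin_pow] at this
      have hymp : 0 < ymin ^ (n-2) := pow_pos hymin_pos _
      have hz : D t ^ 2 = 0 := by
        rw [this]
        field_simp <;> ring
      exact pow_eq_zero_iff (by norm_num : 2 ≠ 0) |>.mp hz
    · exact h
  -- monotonicity of X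
  have hXanti : AntitoneOn X (Icc 0 tp) := by
    apply antitoneOn_of_deriv_nonpos (convex_Icc 0 tp) (hXcont.mono Icc_subset_Ici_self)
    · rw [interior_Icc]
      exact fun x hx => (hXd' x hx.1).differentiableAt.differentiableWithinAt
    · rw [interior_Icc]
      intro x hx
      rw [hderivX x hx.1]
      exact (hneg x hx.1.le hx.2).le
  have hXleR : ∀ t ∈ Icc (0:ℝ) tp, X t ≤ R := by
    intro t ht
    have := hXanti ⟨le_rfl, htp_pos.le⟩ ht ht.1
    rwa [hX0] at this
  have hXmonoUp : MonotoneOn X (Ici tp) := by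
    apply monotoneOn_of_deriv_nonneg (convex_Ici tp) (hXcont.mono (Ici_subset_Ici.mpr htp_pos.le))
    · rw [interior_Ici]
      exact fun x hx => (hXd' x (htp_pos.trans hx)).differentiableAt.differentiableWithinAt
    · rw [interior_Ici]
      intro x hx
      rw [hderivX x (htp_pos.trans hx)]
      exact (hposD x hx).le
  -- explicit formulas for D
  have hDneg_eq : ∀ t : ℝ, 0 ≤ t → t < tp → D t = -Real.sqrt (C - A / X t ^ (n-2)) := by
    intro t ht h
    have h2 := hD2 t ht
    have hlt := hneg t ht h
    have : Real.sqrt (C - A / X t ^ (n-2)) = |D t| := by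
      rw [← h2]; exact Real.sqrt_sq_eq_abs _
    rw [this, abs_of_neg hlt, neg_neg]
  have hDpos_eq : ∀ t : ℝ, tp < t → D t = Real.sqrt (C - A / X t ^ (n-2)) := by
    intro t h
    have ht : 0 ≤ t := (htp_pos.trans h).le
    have h2 := hD2 t ht
    have hlt := hposD t h
    have : Real.sqrt (C - A / X t ^ (n-2)) = |D t| := by
      rw [← h2]; exact Real.sqrt_sq_eq_abs _
    rw [this, abs_of_pos hlt]
  -- the integrand
  set f : ℝ → ℝ := fun y => 1 / Real.sqrt (C - A / y ^ (n - 2)) with hfdef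
  have hf_cont : ContinuousOn f (Ioi ymin) := by
    apply ContinuousOn.div continuousOn_const
    · apply Real.continuous_sqrt.comp_continuousOn
      apply ContinuousOn.sub continuousOn_const
      apply ContinuousOn.div continuousOn_const
      · exact (continuousOn_id.pow _)
      · intro y hy
        exact pow_ne_zero _ (hymin_pos.trans hy).ne'
    · intro y hy
      exact (Real.sqrt_pos.mpr (hphi_pos y hy)).ne'
  -- change of variables on intervals avoiding the turning value
  have hsubst : ∀ a b : ℝ, 0 ≤ a → a ≤ b → (∀ u ∈ Icc a b, ymin < X u) →
      (∫ x in a..b, D x • f (X x)) = ∫ u in (X a)..(X b), f u := by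
    intro a b ha hab him
    have huIcc : (Set.uIcc a b) = Icc a b := uIcc_of_le hab
    have h1 : ContinuousOn X (Set.uIcc a b) := by
      rw [huIcc]
      exact hXcont.mono (Icc_subset_Ici_self.trans (Ici_subset_Ici.mpr ha))
    have h2 : ∀ x ∈ Ioo (min a b) (max a b), HasDerivWithinAt X (D x) (Ioi x) x := by
      rw [min_eq_left hab, max_eq_right hab]
      intro x hx
      exact ((hXd' x (ha.trans_lt hx.1)).hasDerivWithinAt)
    have h3 : ContinuousOn D (Set.uIcc a b) := by
      rw [huIcc]
      exact hDcont.mono (Icc_subset_Ici_self.trans (Ici_subset_Ici.mpr ha))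
    have h4 : ContinuousOn f (X '' (Set.uIcc a b)) := by
      apply hf_cont.mono
      rintro y ⟨u, hu, rfl⟩
      rw [huIcc] at hu
      exact him u hu
    exact intervalIntegral.integral_comp_smul_deriv'' h1 h2 h3 h4
  -- downward phase: the integral identity before the turning time
  have hdown : ∀ t : ℝ, 0 ≤ t → t < tp → (∫ u in (X t)..R, f u) = t := by
    intro t ht htlt
    have him : ∀ u ∈ Icc (0:ℝ) t, ymin < X u := by
      intro u hu
      exact hXgt u hu.1 (hneg u hu.1 (lt_of_le_of_lt hu.2 htlt)).ne
    have hs := hsubst 0 t le_rfl ht him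
    have hval : ∀ x ∈ Icc (0:ℝ) t, D x • f (X x) = -1 := by
      intro x hx
      have hx0 : 0 ≤ x := hx.1
      have hxlt : x < tp := lt_of_le_of_lt hx.2 htlt
      have hphix : 0 < C - A / X x ^ (n-2) := hphi_pos _ (him x hx)
      have hDx := hDneg_eq x hx0 hxlt
      rw [smul_eq_mul, hfdef]
      simp only
      rw [hDx]
      rw [mul_one_div]
      rw [neg_div]
      rw [div_self (Real.sqrt_pos.mpr hphix).ne']
    have hl : (∫ x in (0:ℝ)..t, D x • f (X x)) = -t := by
      rw [intervalIntegral.integral_congr (g := fun _ => (-1:ℝ)) ?_]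
      · simp
      · intro x hx
        rw [uIcc_of_le ht] at hx
        exact hval x hx
    rw [hl, hX0] at hs
    rw [intervalIntegral.integral_symm] at hs
    linarith
  -- interval integrability of f on [ymin, R]
  have hphi_deriv : ∀ y : ℝ, 0 < y →
      HasDerivAt (fun y : ℝ => C - A / y ^ (n-2))
        (A * ((n:ℝ) - 2) / y ^ (n-1)) y := by
    intro y hy
    have h1 : HasDerivAt (fun y : ℝ => y ^ (n-2)) (((n-2:ℕ):ℝ) * y ^ (n-2-1)) y :=
      hasDerivAt_pow (n-2) y
    have h2 := h1.inv (pow_ne_zero _ hy.ne')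
    have h3 := (h2.const_mul A).const_sub C
    have heq : -(A * (-(((n-2:ℕ):ℝ) * y ^ (n-2-1)) / (y ^ (n-2)) ^ 2))
        = A * ((n:ℝ) - 2) / y ^ (n-1) := by
      have hexp : (y ^ (n-2)) ^ 2 = y ^ (n-2-1) * y ^ (n-1) := by
        rw [← pow_mul, ← pow_add]; congr 1; omega
      rw [hexp, hcast]
      have h6 : y ^ (n-2-1) ≠ 0 := pow_ne_zero _ hy.ne'
      rw [neg_div, mul_comm ((n:ℝ) - 2) (y ^ (n-2-1)), mul_div_mul_left _ _ h6]
      rw [mul_div_assoc]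
      ring
    rw [heq] at h3
    have hfn : (fun y : ℝ => C - A * (y ^ (n-2))⁻¹) = fun y : ℝ => C - A / y ^ (n-2) := by
      funext z; rw [div_eq_mul_inv]
    simp only [Pi.inv_apply] at h3; rwa [hfn] at h3
  set m : ℝ := A * ((n:ℝ) - 2) / R ^ (n-1) with hmdef
  have hm0 : 0 < m := by positivity
  have hphi_lb : ∀ y ∈ Icc ymin R, m * (y - ymin) ≤ C - A / y ^ (n-2) := by
    have hcontphi : ContinuousOn (fun y : ℝ => C - A / y ^ (n-2)) (Icc ymin R) := by
      apply ContinuousOn.sub continuousOn_const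
      apply ContinuousOn.div continuousOn_const (continuousOn_id.pow _)
      intro y hy
      exact pow_ne_zero _ (hymin_pos.trans_le hy.1).ne'
    have hdiffphi : DifferentiableOn ℝ (fun y : ℝ => C - A / y ^ (n-2)) (interior (Icc ymin R)) := by
      rw [interior_Icc]
      exact fun y hy => (hphi_deriv y (hymin_pos.trans hy.1)).differentiableAt.differentiableWithinAt
    have hbd : ∀ y ∈ interior (Icc ymin R), m ≤ deriv (fun y : ℝ => C - A / y ^ (n-2)) y := by
      rw [interior_Icc]
      intro y hy
      have hy0 : 0 < y := hymin_pos.trans hy.1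
      rw [(hphi_deriv y hy0).deriv, hmdef]
      apply div_le_div_of_nonneg_left (by positivity) (pow_pos hy0 _)
      exact pow_le_pow_left₀ hy0.le hy.2.le _
    intro y hy
    have := (convex_Icc ymin R).mul_sub_le_image_sub_of_le_deriv hcontphi hdiffphi hbd
      ymin ⟨le_rfl, hymin_lt_R.le⟩ y hy hy.1
    have hphiy : C - A / ymin ^ (n-2) = 0 := by
      rw [hymin_pow]
      field_simp <;> ring
    try simp only at this
    linarith
  have hmeasf : Measurable f := by
    have h1 : Measurable fun y : ℝ => C - A / y ^ (n-2) :=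
      measurable_const.sub (measurable_const.div (measurable_id.pow_const _))
    have h2 : Measurable fun y : ℝ => Real.sqrt (C - A / y ^ (n-2)) :=
      Real.continuous_sqrt.measurable.comp h1
    have : f = fun y => (Real.sqrt (C - A / y ^ (n-2)))⁻¹ := by
      funext y; rw [hfdef]; simp [one_div]
    rw [this]
    exact h2.inv
  have hint : IntervalIntegrable f volume ymin R := by
    have hbase : IntervalIntegrable (fun y : ℝ => (y - ymin) ^ (-(1/2) : ℝ)) volume ymin R := by
      have h0 := intervalIntegral.intervalIntegrable_rpow'
        (a := 0) (b := R - ymin) (r := -(1/2)) (by norm_num)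
      have h1 := h0.comp_sub_right ymin
      rw [zero_add, sub_add_cancel] at h1
      exact h1
    have hg_int : IntervalIntegrable
        (fun y => (Real.sqrt m)⁻¹ * (y - ymin) ^ (-(1/2) : ℝ)) volume ymin R :=
      hbase.const_mul _
    apply hg_int.mono_fun (hmeasf.aestronglyMeasurable.restrict)
    rw [Filter.EventuallyLE]
    rw [MeasureTheory.ae_restrict_iff' measurableSet_uIoc]
    apply Filter.Eventually.of_forall
    intro y hy
    rw [Set.uIoc_of_le hymin_lt_R.le] at hy
    have hylb : ymin < y := hy.1
    have hysub : 0 < y - ymin := sub_pos.mpr hylb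
    have hphiy : 0 < C - A / y ^ (n-2) := hphi_pos y hylb
    have hlb := hphi_lb y ⟨hylb.le, hy.2⟩
    have hmy : 0 < m * (y - ymin) := mul_pos hm0 hysub
    have hkey : f y ≤ (Real.sqrt m)⁻¹ * (y - ymin) ^ (-(1/2) : ℝ) := by
      have h1 : Real.sqrt (m * (y - ymin)) ≤ Real.sqrt (C - A / y ^ (n-2)) :=
        Real.sqrt_le_sqrt hlb
      have h2 : 0 < Real.sqrt (m * (y - ymin)) := Real.sqrt_pos.mpr hmy
      have h3 : f y ≤ 1 / Real.sqrt (m * (y - ymin)) := by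
        rw [hfdef]
        simp only
        exact one_div_le_one_div_of_le h2 h1
      have h4 : (1 : ℝ) / Real.sqrt (m * (y - ymin))
          = (Real.sqrt m)⁻¹ * (y - ymin) ^ (-(1/2) : ℝ) := by
        rw [Real.sqrt_mul hm0.le, one_div, mul_inv]
        congr 1
        rw [Real.sqrt_eq_rpow, ← Real.rpow_neg hysub.le]
      rw [h4] at h3
      exact h3
    have hfy_nonneg : 0 ≤ f y := by
      rw [hfdef]
      positivity
    rw [Real.norm_eq_abs, Real.norm_eq_abs, abs_of_nonneg hfy_nonneg]
    refine hkey.trans (le_abs_self _)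
  -- continuity of the primitive G s = ∫ s..R f
  set G : ℝ → ℝ := fun s => ∫ u in s..R, f u with hGdef
  have hGcont : ContinuousWithinAt G (Icc ymin R) ymin := by
    have hprim : ContinuousWithinAt (fun b => ∫ u in R..b, f u) (Icc ymin R) ymin := by
      apply intervalIntegral.continuousWithinAt_primitive (measure_singleton _)
      rw [min_eq_right hymin_lt_R.le, max_self]
      exact hint
    have : G = fun s => -∫ u in R..s, f u := by
      funext s
      rw [hGdef]
      simp only
      rw [intervalIntegral.integral_symm]
    rw [this]
    exact hprim.neg
  -- the total integral equals tp
  have hGymin : G ymin = tp := by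
    set l : Filter ℝ := 𝓝[Ioo 0 tp] tp with hldef
    haveI hlne : l.NeBot := right_nhdsWithin_Ioo_neBot htp_pos
    have hle : l ≤ 𝓝[Ici 0] tp := nhdsWithin_mono tp (fun x hx => hx.1.le)
    have hXt : Filter.Tendsto X l (𝓝 ymin) := by
      have := (hXcont tp (le_of_lt htp_pos)).tendsto
      rw [hXtp_val] at this
      exact this.mono_left hle
    have hXt' : Filter.Tendsto X l (𝓝[Icc ymin R] ymin) := by
      rw [tendsto_nhdsWithin_iff]
      refine ⟨hXt, ?_⟩
      apply Filter.eventually_of_mem self_mem_nhdsWithin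
      intro x hx
      exact ⟨hXge x hx.1.le, hXleR x ⟨hx.1.le, hx.2.le⟩⟩
    have h1 : Filter.Tendsto (fun t => G (X t)) l (𝓝 (G ymin)) := hGcont.tendsto.comp hXt'
    have h2 : Filter.Tendsto (fun t => G (X t)) l (𝓝 tp) := by
      have heq : (fun t => G (X t)) =ᶠ[l] id := by
        apply Filter.eventually_of_mem self_mem_nhdsWithin
        intro x hx
        exact hdown x hx.1.le hx.2
      have : Filter.Tendsto (id : ℝ → ℝ) l (𝓝 tp) :=
        tendsto_id.mono_left (nhdsWithin_le_nhds)
      exact Filter.Tendsto.congr' heq.symm this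
    exact tendsto_nhds_unique h1 h2
  -- existence of a time T with X T = R
  have hc₂ : 0 < D (tp + 1) := hposD _ (by linarith)
  obtain ⟨T, hTgt, hXT⟩ : ∃ T : ℝ, tp < T ∧ X T = R := by
    set c₂ := D (tp + 1) with hc₂def
    have grow : ∀ t : ℝ, tp + 1 ≤ t → X (tp+1) + c₂ * (t - (tp+1)) ≤ X t := by
      intro t htt
      have hsub3 : Icc (tp+1) t ⊆ Ici (0:ℝ) := fun x hx => le_trans (by linarith) hx.1
      have hdiff3 : DifferentiableOn ℝ X (interior (Icc (tp+1) t)) := by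
        rw [interior_Icc]
        exact fun x hx => (hXd' x (by linarith [hx.1])).differentiableAt.differentiableWithinAt
      have hbd3 : ∀ x ∈ interior (Icc (tp+1) t), c₂ ≤ deriv X x := by
        rw [interior_Icc]
        intro x hx
        rw [hderivX x (by linarith [hx.1])]
        exact hDmono.monotoneOn (by simp; linarith) (by simp; linarith [hx.1]) (by linarith [hx.1])
      have hmvt := (convex_Icc (tp+1) t).mul_sub_le_image_sub_of_le_deriv
        (hXcont.mono hsub3) hdiff3 hbd3 (tp+1) ⟨le_rfl, htt⟩ t ⟨htt, le_rfl⟩ htt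
      linarith
    set T₂ : ℝ := tp + 1 + max 0 ((R - X (tp+1)) / c₂) with hT₂def
    have hmax0 : 0 ≤ max 0 ((R - X (tp+1)) / c₂) := le_max_left _ _
    have hT₂ge : tp + 1 ≤ T₂ := by rw [hT₂def]; linarith
    have hXT₂ : R ≤ X T₂ := by
      have hg := grow T₂ hT₂ge
      have h5 : R - X (tp+1) ≤ c₂ * max 0 ((R - X (tp+1)) / c₂) := by
        rcases le_or_gt (R - X (tp+1)) 0 with h | h
        · have : 0 ≤ c₂ * max 0 ((R - X (tp+1)) / c₂) := mul_nonneg hc₂.le hmax0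
          linarith
        · rw [max_eq_right (div_nonneg h.le hc₂.le)]
          rw [mul_div_cancel₀ _ hc₂.ne']
      have h6 : T₂ - (tp+1) = max 0 ((R - X (tp+1)) / c₂) := by rw [hT₂def]; ring
      rw [h6] at hg
      linarith
    have hiv := intermediate_value_Icc (by linarith : tp ≤ T₂)
      (hXcont.mono (Icc_subset_Ici_self.trans (Ici_subset_Ici.mpr htp_pos.le)))
    have hmem : R ∈ Icc (X tp) (X T₂) := ⟨by rw [hXtp_val]; exact hymin_lt_R.le, hXT₂⟩
    obtain ⟨T, hTmem, hXT⟩ := hiv hmem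
    refine ⟨T, ?_, hXT⟩
    rcases eq_or_lt_of_le hTmem.1 with h | h
    · exfalso
      rw [← h, hXtp_val] at hXT
      exact hymin_lt_R.ne hXT
    · exact h
  -- upward phase identity
  have hup : ∀ s : ℝ, tp < s → s ≤ T → (∫ u in (X s)..R, f u) = T - s := by
    intro s hs hsT
    have hs0 : 0 ≤ s := (htp_pos.trans hs).le
    have him : ∀ u ∈ Icc s T, ymin < X u := by
      intro u hu
      exact hXgt u (hs0.trans hu.1) (hposD u (hs.trans_le hu.1)).ne'
    have hsub2 := hsubst s T hs0 hsT him
    have hval : ∀ x ∈ Icc s T, D x • f (X x) = 1 := by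
      intro x hx
      have hxgt : tp < x := hs.trans_le hx.1
      have hphix : 0 < C - A / X x ^ (n-2) := hphi_pos _ (him x hx)
      rw [smul_eq_mul, hfdef]
      simp only
      rw [hDpos_eq x hxgt, mul_one_div]
      rw [div_self (Real.sqrt_pos.mpr hphix).ne']
    have hl : (∫ x in s..T, D x • f (X x)) = T - s := by
      rw [intervalIntegral.integral_congr (g := fun _ => (1:ℝ)) ?_]
      · simp
      · intro x hx
        rw [uIcc_of_le hsT] at hx
        exact hval x hx
    rw [hl, hXT] at hsub2
    exact hsub2.symm
  -- limit from the right gives G ymin = T - tp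
  have hGymin' : G ymin = T - tp := by
    set l : Filter ℝ := 𝓝[Ioo tp T] tp with hldef
    haveI hlne : l.NeBot := left_nhdsWithin_Ioo_neBot hTgt
    have hle : l ≤ 𝓝[Ici 0] tp := nhdsWithin_mono tp (fun x hx => (htp_pos.trans hx.1).le)
    have hXt : Filter.Tendsto X l (𝓝 ymin) := by
      have := (hXcont tp (le_of_lt htp_pos)).tendsto
      rw [hXtp_val] at this
      exact this.mono_left hle
    have hXt' : Filter.Tendsto X l (𝓝[Icc ymin R] ymin) := by
      rw [tendsto_nhdsWithin_iff]
      refine ⟨hXt, ?_⟩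
      apply Filter.eventually_of_mem self_mem_nhdsWithin
      intro x hx
      refine ⟨hXge x (htp_pos.trans hx.1).le, ?_⟩
      rw [← hXT]
      exact hXmonoUp (mem_Ici.mpr hx.1.le) (mem_Ici.mpr hTgt.le) hx.2.le
    have h1 : Filter.Tendsto (fun t => G (X t)) l (𝓝 (G ymin)) := hGcont.tendsto.comp hXt'
    have h2 : Filter.Tendsto (fun t => G (X t)) l (𝓝 (T - tp)) := by
      have heq : (fun t => G (X t)) =ᶠ[l] (fun s => T - s) := by
        apply Filter.eventually_of_mem self_mem_nhdsWithin
        intro x hx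
        exact hup x hx.1 hx.2.le
      have : Filter.Tendsto (fun s : ℝ => T - s) l (𝓝 (T - tp)) := by
        apply Filter.Tendsto.mono_left _ (nhdsWithin_le_nhds)
        exact (continuous_const.sub continuous_id).tendsto tp
      exact Filter.Tendsto.congr' heq.symm this
    exact tendsto_nhds_unique h1 h2
  have hT2tp : T = 2 * tp := by
    rw [hGymin] at hGymin'
    linarith
  -- derivative at time 2tp
  have hD2tp : D (2 * tp) = -v₀ := by
    rw [← hT2tp]
    have hDT : 0 < D T := hposD T hTgt
    have hE := energy T (htp_pos.le.trans hTgt.le)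
    rw [hXT] at hE
    have hCeq : D T ^ 2 = v₀ ^ 2 := by
      rw [hC] at hE
      linarith
    have h1 : (D T - v₀) * (D T + v₀) = 0 := by nlinarith
    rcases mul_eq_zero.mp h1 with h | h
    · exfalso; linarith
    · linarith
  refine ⟨tp, htp_pos, hDtp, huniq, hXtp_val, hneg, hposD, ?_, ?_, hD2tp⟩
  · exact hGymin.symm
  · rw [← hT2tp, hXT]
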